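/- Let x_k = ⟨a_1,...,a_k⟩ and y_k = ⟨a_2,...,a_k⟩ with x_0 = 1, y_0 = 0. Then for 0 ≤ m < n, x_n·y_m − y_n·x_m = (−1)^{m−1}·⟨a_{m+2},...,a_n⟩. -/

import Mathlib

def cont {R : Type*} [CommRing R] : List R → R
  | [] => 1
  | [a] => a
  | a :: b :: l => a * cont (b :: l) + cont l

/-- `x k = ⟨a₁,...,a_k⟩`, with `x 0 = 1`. -/
def xc {R : Type*} [CommRing R] (a : ℕ → R) (k : ℕ) : R :=
  cont (List.map a (List.range' 1 k))

/-- `y k = ⟨a₂,...,a_k⟩`, with `y 0 = 0`. -/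
def yc {R : Type*} [CommRing R] (a : ℕ → R) : ℕ → R
  | 0 => 0
  | k + 1 => cont (List.map a (List.range' 2 k))

lemma cont_snoc2 {R : Type*} [CommRing R] :
    ∀ (l : List R) (b c : R), cont (l ++ [b, c]) = cont (l ++ [b]) * c + cont l
  | [], b, c => by simp [cont]
  | [a], b, c => by simp [cont]; ring
  | a :: a' :: l, b, c => by
      have h1 := cont_snoc2 (a' :: l) b c
      have h2 := cont_snoc2 l b c
      simp only [List.cons_append] at h1 h2 ⊢
      simp only [cont]
      rw [h1, h2]
      ring
  termination_by l => l.length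

lemma Crec {R : Type*} [CommRing R] (a : ℕ → R) (s d : ℕ) :
    cont (List.map a (List.range' s (d + 2)))
      = cont (List.map a (List.range' s (d + 1))) * a (s + d + 1)
        + cont (List.map a (List.range' s d)) := by
  have h2 : List.range' s (d + 2) = List.range' s d ++ [s + d, s + d + 1] := by
    rw [show d + 2 = d + 1 + 1 from rfl, List.range'_1_concat, List.range'_1_concat]
    simp [Nat.add_assoc]
  have h1 : List.range' s (d + 1) = List.range' s d ++ [s + d] := by
    exact List.range'_1_concat
  rw [h2, h1, List.map_append, List.map_append]
  simp only [List.map_cons, List.map_nil]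
  rw [cont_snoc2]

lemma xrec {R : Type*} [CommRing R] (a : ℕ → R) (j : ℕ) :
    xc a (j + 2) = xc a (j + 1) * a (j + 2) + xc a j := by
  simpa [xc, add_comm, add_assoc, add_left_comm] using Crec a 1 j

lemma yrec {R : Type*} [CommRing R] (a : ℕ → R) (j : ℕ) :
    yc a (j + 2) = yc a (j + 1) * a (j + 2) + yc a j := by
  cases j with
  | zero => simp [yc, List.range', cont]
  | succ k => simpa [yc, add_comm, add_assoc, add_left_comm] using Crec a 2 k

lemma det1 {R : Type*} [CommRing R] (a : ℕ → R) :
    ∀ m, xc a (m + 1) * yc a m - yc a (m + 1) * xc a m = (-1 : R) ^ (m + 1)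
  | 0 => by simp [xc, yc, List.range', cont]
  | m + 1 => by
      have h := det1 a m
      rw [xrec a m, yrec a m]
      calc (xc a (m + 1) * a (m + 2) + xc a m) * yc a (m + 1)
            - (yc a (m + 1) * a (m + 2) + yc a m) * xc a (m + 1)
          = -(xc a (m + 1) * yc a m - yc a (m + 1) * xc a m) := by ring
        _ = (-1 : R) ^ (m + 2) := by rw [h]; ring

lemma main_aux {R : Type*} [CommRing R] (a : ℕ → R) (m : ℕ) :
    ∀ d, xc a (m + 1 + d) * yc a m - yc a (m + 1 + d) * xc a m
      = (-1 : R) ^ (m + 1) * cont (List.map a (List.range' (m + 2) d))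
  | 0 => by simpa [cont] using det1 a m
  | 1 => by
      have h := det1 a m
      have hx := xrec a m
      have hy := yrec a m
      rw [show m + 1 + 1 = m + 2 from rfl, hx, hy]
      have : (xc a (m + 1) * a (m + 2) + xc a m) * yc a m
          - (yc a (m + 1) * a (m + 2) + yc a m) * xc a m
          = (xc a (m + 1) * yc a m - yc a (m + 1) * xc a m) * a (m + 2) := by ring
      rw [this, h]
      simp [List.range', cont]
  | d + 2 => by
      have h1 := main_aux a m (d + 1)
      have h0 := main_aux a m d
      have hx := xrec a (m + 1 + d)
      have hy := yrec a (m + 1 + d)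
      have hC := Crec a (m + 2) d
      have e1 : m + 1 + (d + 2) = (m + 1 + d) + 2 := by ring
      have e2 : m + 1 + (d + 1) = (m + 1 + d) + 1 := by ring
      have e3 : m + 1 + d + 2 = m + 2 + d + 1 := by ring
      rw [e1, hx, hy, hC, ← e3, ← e2]
      calc (xc a (m + 1 + (d + 1)) * a (m + 1 + d + 2) + xc a (m + 1 + d)) * yc a m
            - (yc a (m + 1 + (d + 1)) * a (m + 1 + d + 2) + yc a (m + 1 + d)) * xc a m
          = (xc a (m + 1 + (d + 1)) * yc a m - yc a (m + 1 + (d + 1)) * xc a m) * a (m + 1 + d + 2)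
            + (xc a (m + 1 + d) * yc a m - yc a (m + 1 + d) * xc a m) := by ring
        _ = _ := by rw [h1, h0]; ring

theorem convergents_det_general {R : Type*} [CommRing R] (a : ℕ → R) (m n : ℕ)
    (hmn : m < n) :
    xc a n * yc a m - yc a n * xc a m
      = (-1 : R) ^ (m + 1) * cont (List.map a (List.range' (m + 2) (n - m - 1))) := by
  obtain ⟨d, rfl⟩ : ∃ d, n = m + 1 + d := ⟨n - (m + 1), by omega⟩
  rw [show m + 1 + d - m - 1 = d by omega]
  exact main_aux a m d
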